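/- Let α ≥ 1. Define the hypergraph H_α with vertex set V = [k]^n and edge set E = ∪_{i∈[n]} { e : e = {(t, s_{-i}) : t ∈ S} for some s_{-i} ∈ [k]^{n-1} and some nonempty S ⊆ [k] that is upward closed under σ_i(s_{-i}) (i.e., a ∈ S and (a,b) ∈ σ_i(s_{-i}) imply b ∈ S), and ρ_i(t, s_{-i}) ≥ 1/α for every t ∈ S }. Then there exists a deterministic allocation rule x ∈ T_D(σ) with R(ρ,x) ≤ α if and only if H_α has a perfect matching, i.e., a set M ⊆ E of pairwise disjoint hyperedges whose union is V. -/
import Mathlib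


namespace Stmt10

variable {n k : ℕ}

/-- The profile obtained from the sub-profile `t` (signals of agents other than `i`)
by giving agent `i` the signal `a`. -/
def extendProf (i : Fin n) (a : Fin k) (t : {j : Fin n // j ≠ i} → Fin k) : Fin n → Fin k :=
  fun j => if h : j = i then a else t ⟨j, h⟩

/-- Induced performance ratio. -/
noncomputable def rho [NeZero n] (v : Fin n → (Fin n → Fin k) → ℝ) (i : Fin n)
    (s : Fin n → Fin k) : ℝ :=
  v i s / Finset.univ.sup' Finset.univ_nonempty (fun j => v j s)

/-- Membership in the truthful polytope `T(σ)` for the orderings induced by `v`. -/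
def InT (v x : Fin n → (Fin n → Fin k) → ℝ) : Prop :=
  (∀ i s, 0 ≤ x i s ∧ x i s ≤ 1) ∧ (∀ s, ∑ i, x i s = 1) ∧
  (∀ (i : Fin n) (s : Fin n → Fin k) (a b : Fin k),
    v i (Function.update s i a) < v i (Function.update s i b) →
    x i (Function.update s i a) ≤ x i (Function.update s i b))

/-- `e` is a hyperedge of the hypergraph `H_α`. -/
def IsEdge [NeZero n] (v : Fin n → (Fin n → Fin k) → ℝ) (α : ℝ)
    (e : Set (Fin n → Fin k)) : Prop :=
  ∃ (i : Fin n) (t : {j : Fin n // j ≠ i} → Fin k) (S : Set (Fin k)),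
    S.Nonempty ∧
    (∀ a ∈ S, ∀ b : Fin k,
      v i (extendProf i a t) < v i (extendProf i b t) → b ∈ S) ∧
    (∀ a ∈ S, 1 / α ≤ rho v i (extendProf i a t)) ∧
    e = (fun a => extendProf i a t) '' S

def restrictProf (i : Fin n) (s : Fin n → Fin k) : {j : Fin n // j ≠ i} → Fin k :=
  fun j => s j.1

lemma extendProf_restrict (i : Fin n) (s : Fin n → Fin k) (a : Fin k) :
    extendProf i a (restrictProf i s) = Function.update s i a := by
  funext j
  by_cases h : j = i
  · subst h; simp [extendProf]
  · simp [extendProf, restrictProf, h]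

lemma extendProf_apply_self (i : Fin n) (a : Fin k) (t : {j : Fin n // j ≠ i} → Fin k) :
    extendProf i a t i = a := by simp [extendProf]

lemma restrict_extendProf (i : Fin n) (a : Fin k) (t : {j : Fin n // j ≠ i} → Fin k) :
    restrictProf i (extendProf i a t) = t := by
  funext j
  simp [restrictProf, extendProf, j.2]

lemma extendProf_eq_inv {i : Fin n} {a : Fin k} {t : {j : Fin n // j ≠ i} → Fin k}
    {s : Fin n → Fin k} (h : extendProf i a t = s) : a = s i ∧ t = restrictProf i s := by
  subst h; exact ⟨(extendProf_apply_self i a t).symm, (restrict_extendProf i a t).symm⟩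

lemma update_extendProf (i : Fin n) (a b : Fin k) (t : {j : Fin n // j ≠ i} → Fin k) :
    Function.update (extendProf i a t) i b = extendProf i b t := by
  conv_rhs => rw [← restrict_extendProf i a t, extendProf_restrict]

lemma restrict_update (i : Fin n) (s : Fin n → Fin k) (a : Fin k) :
    restrictProf i (Function.update s i a) = restrictProf i s := by
  funext j
  simp [restrictProf, Function.update, j.2]

lemma extendProf_restrict_self (i : Fin n) (s : Fin n → Fin k) :
    extendProf i (s i) (restrictProf i s) = s := by
  rw [extendProf_restrict, Function.update_eq_self]

lemma rho_pos [NeZero n] (v : Fin n → (Fin n → Fin k) → ℝ) (hv : ∀ i s, 0 < v i s)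
    (i : Fin n) (s : Fin n → Fin k) : 0 < rho v i s :=
  div_pos (hv i s) (lt_of_lt_of_le (hv i s) (Finset.le_sup' (fun j => v j s) (Finset.mem_univ i)))

lemma one_div_le_iff' {α r : ℝ} (hα : 0 < α) (hr : 0 < r) : 1 / r ≤ α ↔ 1 / α ≤ r := by
  rw [div_le_iff₀ hr, div_le_iff₀ hα, mul_comm]

/-- there is a deterministic truthful allocation rule of ratio at most `α`
iff the hypergraph `H_α` has a perfect matching. -/
theorem stmt10 [NeZero n] [NeZero k] (α : ℝ) (hα : 1 ≤ α)
    (v : Fin n → (Fin n → Fin k) → ℝ) (hv : ∀ i s, 0 < v i s) :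
    (∃ x : Fin n → (Fin n → Fin k) → ℝ, InT v x ∧ (∀ i s, x i s = 0 ∨ x i s = 1) ∧
      Finset.univ.sup' Finset.univ_nonempty
        (fun s : Fin n → Fin k => ∑ i, x i s / rho v i s) ≤ α) ↔
    (∃ M : Set (Set (Fin n → Fin k)),
      (∀ e ∈ M, IsEdge v α e) ∧
      M.PairwiseDisjoint id ∧
      ⋃₀ M = Set.univ) := by
  have hαpos : (0:ℝ) < α := lt_of_lt_of_le one_pos hα
  constructor
  · rintro ⟨x, ⟨hx01, hxsum, hxmono⟩, hdet, hsup⟩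
    -- unique winner per profile
    have hone : ∀ s : Fin n → Fin k, ∃! i, x i s = 1 := by
      intro s
      have hex : ∃ i, x i s = 1 := by
        by_contra h
        push_neg at h
        have h0 : ∀ i, x i s = 0 := fun i => (hdet i s).resolve_right (h i)
        have := hxsum s
        simp only [h0, Finset.sum_const_zero] at this
        exact zero_ne_one this
      obtain ⟨i, hi⟩ := hex
      refine ⟨i, hi, ?_⟩
      intro j hj
      by_contra hne
      have hsub : ({j, i} : Finset (Fin n)) ⊆ Finset.univ := Finset.subset_univ _
      have hpair : ∑ l ∈ ({j, i} : Finset (Fin n)), x l s = 2 := by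
        rw [Finset.sum_pair hne, hi, hj]; norm_num
      have hle : ∑ l ∈ ({j, i} : Finset (Fin n)), x l s ≤ ∑ l, x l s :=
        Finset.sum_le_sum_of_subset_of_nonneg hsub (fun l _ _ => (hx01 l s).1)
      rw [hpair, hxsum s] at hle
      linarith
    -- ratio bound at winning profiles
    have hratio : ∀ (i : Fin n) (s : Fin n → Fin k), x i s = 1 → 1 / α ≤ rho v i s := by
      intro i s hi
      have h1 : ∑ j, x j s / rho v j s ≤ α :=
        le_trans (Finset.le_sup' (fun s => ∑ j, x j s / rho v j s) (Finset.mem_univ s)) hsup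
      have h2 : x i s / rho v i s ≤ ∑ j, x j s / rho v j s :=
        Finset.single_le_sum
          (fun j _ => div_nonneg (hx01 j s).1 (rho_pos v hv j s).le) (Finset.mem_univ i)
      rw [hi] at h2
      exact (one_div_le_iff' hαpos (rho_pos v hv i s)).mp (le_trans h2 h1)
    refine ⟨{e | ∃ (i : Fin n) (t : {j : Fin n // j ≠ i} → Fin k),
        (∃ a, x i (extendProf i a t) = 1) ∧
        e = (fun a => extendProf i a t) '' {a | x i (extendProf i a t) = 1}}, ?_, ?_, ?_⟩
    · rintro e ⟨i, t, ⟨a0, ha0⟩, rfl⟩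
      refine ⟨i, t, _, ⟨a0, ha0⟩, ?_, fun a ha => hratio i _ ha, rfl⟩
      intro a ha b hlt
      have := hxmono i (extendProf i a t) a b
      rw [update_extendProf, update_extendProf] at this
      have hle := this hlt
      rw [ha] at hle
      rcases hdet i (extendProf i b t) with h | h
      · rw [h] at hle; linarith
      · exact h
    · rintro e1 ⟨i1, t1, _, rfl⟩ e2 ⟨i2, t2, _, rfl⟩ hne
      rw [Function.onFun, Set.disjoint_left]
      rintro s ⟨a1, ha1, hs1⟩ ⟨a2, ha2, hs2⟩
      obtain ⟨hae1, hte1⟩ := extendProf_eq_inv hs1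
      obtain ⟨hae2, hte2⟩ := extendProf_eq_inv hs2
      have hx1 : x i1 s = 1 := by rw [← hs1]; exact ha1
      have hx2 : x i2 s = 1 := by rw [← hs2]; exact ha2
      obtain ⟨w, -, hw⟩ := hone s
      have hi : i1 = i2 := (hw i1 hx1).trans (hw i2 hx2).symm
      subst hi
      have ht : t1 = t2 := hte1.trans hte2.symm
      subst ht
      exact hne rfl
    · ext s
      simp only [Set.mem_sUnion, Set.mem_univ, iff_true]
      obtain ⟨w, hw, -⟩ := hone s
      have hsw : x w (extendProf w (s w) (restrictProf w s)) = 1 := by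
        rw [extendProf_restrict_self]; exact hw
      exact ⟨_, ⟨w, restrictProf w s, ⟨s w, hsw⟩, rfl⟩, ⟨s w, hsw, extendProf_restrict_self w s⟩⟩
  · rintro ⟨M, hME, hdisj, hcov⟩
    classical
    -- unique edge containing each profile
    have huniq : ∀ s : Fin n → Fin k, ∃! e, e ∈ M ∧ s ∈ e := by
      intro s
      have hs : s ∈ ⋃₀ M := by rw [hcov]; trivial
      obtain ⟨e, he, hse⟩ := hs
      refine ⟨e, ⟨he, hse⟩, ?_⟩
      rintro e' ⟨he', hse'⟩
      by_contra hne
      exact Set.disjoint_left.mp (hdisj he' he hne) hse' hse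
    -- witness agent of each edge
    set W : Set (Fin n → Fin k) → Fin n := fun e =>
      if h : IsEdge v α e then h.choose else Classical.arbitrary _ with hWdef
    have hW : ∀ e ∈ M, ∃ (t : {j : Fin n // j ≠ W e} → Fin k) (S : Set (Fin k)),
        S.Nonempty ∧
        (∀ a ∈ S, ∀ b : Fin k,
          v (W e) (extendProf (W e) a t) < v (W e) (extendProf (W e) b t) → b ∈ S) ∧
        (∀ a ∈ S, 1 / α ≤ rho v (W e) (extendProf (W e) a t)) ∧
        e = (fun a => extendProf (W e) a t) '' S := by
      intro e he
      have h := hME e he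
      have hWe : W e = h.choose := dif_pos h
      rw [hWe]
      exact h.choose_spec
    have hxval : ∀ (s : Fin n → Fin k) (e), e ∈ M → s ∈ e → ∀ i,
        (if ∃ e ∈ M, s ∈ e ∧ W e = i then (1:ℝ) else 0) = if W e = i then 1 else 0 := by
      intro s e he hse i
      by_cases h : W e = i
      · rw [if_pos ⟨e, he, hse, h⟩, if_pos h]
      · rw [if_neg, if_neg h]
        rintro ⟨e', he', hse', hW'⟩
        exact h (((huniq s).unique ⟨he, hse⟩ ⟨he', hse'⟩) ▸ hW')
    refine ⟨fun i s => if ∃ e ∈ M, s ∈ e ∧ W e = i then 1 else 0, ⟨?_, ?_, ?_⟩, ?_, ?_⟩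
    · intro i s; by_cases h : ∃ e ∈ M, s ∈ e ∧ W e = i <;> simp [h]
    · intro s
      obtain ⟨e, ⟨he, hse⟩, -⟩ := huniq s
      calc ∑ i, (if ∃ e ∈ M, s ∈ e ∧ W e = i then (1:ℝ) else 0)
          = ∑ i, if W e = i then (1:ℝ) else 0 :=
            Finset.sum_congr rfl fun i _ => hxval s e he hse i
        _ = 1 := by rw [Finset.sum_ite_eq]; simp
    · intro i s a b hlt
      simp only
      by_cases hcase : ∃ e ∈ M, Function.update s i a ∈ e ∧ W e = i
      · obtain ⟨e, he, hsae, hWi⟩ := hcase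
        obtain ⟨t, S, hne, hup, hrat, heq⟩ := hW e he
        set i0 := W e with hi0
        subst hWi
        rw [heq] at hsae
        obtain ⟨a', ha', hext⟩ := hsae
        obtain ⟨ha'eq, hteq⟩ := extendProf_eq_inv hext
        rw [Function.update_self] at ha'eq
        subst ha'eq
        rw [restrict_update] at hteq
        subst hteq
        have hsa : extendProf i0 a' (restrictProf i0 s) = Function.update s i0 a' :=
          extendProf_restrict _ _ _
        have hsb : extendProf i0 b (restrictProf i0 s) = Function.update s i0 b :=
          extendProf_restrict _ _ _
        have hbS : b ∈ S := hup a' ha' b (by rw [hsa, hsb]; exact hlt)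
        have hmem : Function.update s i0 b ∈ e := by
          rw [heq]; exact ⟨b, hbS, hsb⟩
        have h2 : (if ∃ e ∈ M, Function.update s i0 b ∈ e ∧ W e = i0 then (1:ℝ) else 0) = 1 :=
          if_pos ⟨e, he, hmem, hi0.symm⟩
        rw [h2]
        split <;> norm_num
      · rw [if_neg hcase]
        split <;> norm_num
    · intro i s; by_cases h : ∃ e ∈ M, s ∈ e ∧ W e = i <;> simp [h]
    · apply Finset.sup'_le
      intro s _
      obtain ⟨e, ⟨he, hse⟩, -⟩ := huniq s
      obtain ⟨t, S, hne, hup, hrat, heq⟩ := hW e he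
      have hsum : ∑ i, (if ∃ e ∈ M, s ∈ e ∧ W e = i then (1:ℝ) else 0) / rho v i s
          = 1 / rho v (W e) s := by
        calc ∑ i, (if ∃ e ∈ M, s ∈ e ∧ W e = i then (1:ℝ) else 0) / rho v i s
            = ∑ i, if W e = i then 1 / rho v i s else 0 := by
              refine Finset.sum_congr rfl fun i _ => ?_
              rw [hxval s e he hse i]
              split <;> simp
          _ = 1 / rho v (W e) s := by rw [Finset.sum_ite_eq]; simp
      rw [hsum]
      have hsmem : s ∈ e := hse
      rw [heq] at hsmem
      obtain ⟨a, haS, hext⟩ := hsmem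
      have hr : 1 / α ≤ rho v (W e) s := by rw [← hext]; exact hrat a haS
      exact (one_div_le_iff' hαpos (rho_pos v hv (W e) s)).mpr hr


end Stmt10
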